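/- Let H be a real Hilbert space, (ε_n)_{n∈ℤ} a white-noise family (orthogonal, ‖ε_n‖ = σ > 0), φ₁, φ₂ ∈ ℝ with |φ₁| + |φ₂| < 1. Then the family (Y_t)_{t∈ℤ} with Y_t = ∑_{u≥0} A_u ε_{t-u} (A_u the Horadam numbers) is the unique family of vectors in the closed span of {ε_s : s ≤ t} solving Y_t = φ₁Y_{t-1} + φ₂Y_{t-2} + ε_t with sup_t ‖Y_t‖ < ∞. -/

import Mathlib

theorem linear_process_unique_solution (H : Type*) [NormedAddCommGroup H]
    [InnerProductSpace ℝ H] [CompleteSpace H]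
    (σ : ℝ) (hσ : 0 < σ) (ε : ℤ → H)
    (horth : ∀ m n : ℤ, m ≠ n → (inner ℝ (ε m) (ε n) : ℝ) = 0)
    (hnorm : ∀ n : ℤ, ‖ε n‖ = σ)
    (φ1 φ2 : ℝ) (h : |φ1| + |φ2| < 1)
    (A : ℕ → ℝ) (hA0 : A 0 = 1) (hA1 : A 1 = φ1)
    (hA : ∀ u, A (u + 2) = φ1 * A (u + 1) + φ2 * A u)
    (Y : ℤ → H) (hY : ∀ t : ℤ, HasSum (fun u : ℕ => A u • ε (t - u)) (Y t)) :
    (∀ t : ℤ, Y t ∈ closure (Submodule.span ℝ {x : H | ∃ s : ℤ, s ≤ t ∧ x = ε s} : Set H))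
    ∧ (∀ t : ℤ, Y t = φ1 • Y (t - 1) + φ2 • Y (t - 2) + ε t)
    ∧ (∃ C : ℝ, ∀ t : ℤ, ‖Y t‖ ≤ C)
    ∧ ∀ Z : ℤ → H,
        (∀ t : ℤ, Z t ∈ closure (Submodule.span ℝ {x : H | ∃ s : ℤ, s ≤ t ∧ x = ε s} : Set H)) →
        (∀ t : ℤ, Z t = φ1 • Z (t - 1) + φ2 • Z (t - 2) + ε t) →
        (∃ C : ℝ, ∀ t : ℤ, ‖Z t‖ ≤ C) → Z = Y := by
  have hφ1 : |φ1| < 1 := by have := abs_nonneg φ2; linarith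
  -- λ : dominant root
  set l : ℝ := (|φ1| + Real.sqrt (φ1 ^ 2 + 4 * |φ2|)) / 2 with hl
  have hsq : Real.sqrt (φ1 ^ 2 + 4 * |φ2|) ^ 2 = φ1 ^ 2 + 4 * |φ2| :=
    Real.sq_sqrt (by positivity)
  have hsnn : 0 ≤ Real.sqrt (φ1 ^ 2 + 4 * |φ2|) := Real.sqrt_nonneg _
  have hlnn : 0 ≤ l := by have := abs_nonneg φ1; positivity
  have hl1 : l < 1 := by
    have habs : |φ1| ^ 2 = φ1 ^ 2 := sq_abs φ1
    nlinarith [abs_nonneg φ1, abs_nonneg φ2]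
  have hlge : |φ1| ≤ l := by
    have : |φ1| ≤ Real.sqrt (φ1 ^ 2 + 4 * |φ2|) := by
      rw [← Real.sqrt_sq_eq_abs]
      exact Real.sqrt_le_sqrt (by nlinarith [abs_nonneg φ2])
    rw [hl]; linarith
  have hleq : l ^ 2 = |φ1| * l + |φ2| := by
    have habs : |φ1| ^ 2 = φ1 ^ 2 := sq_abs φ1
    rw [hl]; nlinarith
  -- |A u| ≤ l ^ u
  have hAle : ∀ u : ℕ, |A u| ≤ l ^ u := by
    intro u
    induction u using Nat.strong_induction_on with
    | _ u ih =>
      match u with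
      | 0 => simp [hA0]
      | 1 => simpa [hA1] using hlge
      | (v + 2) =>
        have h1 := ih (v + 1) (by omega)
        have h0 := ih v (by omega)
        have hlv : (0:ℝ) ≤ l ^ v := pow_nonneg hlnn v
        calc |A (v + 2)| = |φ1 * A (v + 1) + φ2 * A v| := by rw [hA]
          _ ≤ |φ1| * |A (v + 1)| + |φ2| * |A v| := by
              simpa [abs_mul] using abs_add_le (φ1 * A (v + 1)) (φ2 * A v)
          _ ≤ |φ1| * l ^ (v + 1) + |φ2| * l ^ v := by
              gcongr <;> first | positivity | exact h1 | exact h0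
          _ = (|φ1| * l + |φ2|) * l ^ v := by ring
          _ = l ^ (v + 2) := by rw [← hleq]; ring
  -- summability of norms
  have hsumm : ∀ t : ℤ, Summable (fun u : ℕ => ‖A u • ε (t - u)‖) := by
    intro t
    apply Summable.of_nonneg_of_le (fun u => norm_nonneg _)
      (fun u => ?_) ((summable_geometric_of_lt_one hlnn hl1).mul_right σ)
    rw [norm_smul, hnorm]
    exact mul_le_mul_of_nonneg_right (by simpa using hAle u) hσ.le
  -- Part 1: membership in closed span
  have part1 : ∀ t : ℤ,
      Y t ∈ closure (Submodule.span ℝ {x : H | ∃ s : ℤ, s ≤ t ∧ x = ε s} : Set H) := by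
    intro t
    refine mem_closure_of_tendsto (hY t).tendsto_sum_nat
      (Filter.Eventually.of_forall fun n => ?_)
    exact Submodule.sum_mem _ fun u _ =>
      Submodule.smul_mem _ _ (Submodule.subset_span ⟨t - u, by omega, rfl⟩)
  -- Part 2: the recurrence
  have part2 : ∀ t : ℤ, Y t = φ1 • Y (t - 1) + φ2 • Y (t - 2) + ε t := by
    intro t
    have h1 : HasSum (fun u : ℕ => A (u + 1) • ε (t - (u + 1 : ℕ)))
        (Y t - ∑ i ∈ Finset.range 1, A i • ε (t - (i : ℕ))) :=
      (hasSum_nat_add_iff' 1).2 (hY t)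
    have hφ1sum : HasSum (fun u : ℕ => (φ1 * A u) • ε (t - 1 - u)) (φ1 • Y (t - 1)) := by
      simpa [mul_smul] using (hY (t - 1)).const_smul φ1
    have hφ2sum : HasSum (fun u : ℕ => (φ2 * A u) • ε (t - 2 - u)) (φ2 • Y (t - 2)) := by
      simpa [mul_smul] using (hY (t - 2)).const_smul φ2
    set g : ℕ → H := fun u => (A (u + 1) - φ1 * A u) • ε (t - 1 - u) with hg
    have hgsum : HasSum g (φ2 • Y (t - 2)) := by
      have hshift : HasSum (fun u : ℕ => g (u + 1)) (φ2 • Y (t - 2)) := by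
        have : ∀ u : ℕ, g (u + 1) = (φ2 * A u) • ε (t - 2 - u) := by
          intro u
          have : t - 1 - ((u : ℤ) + 1) = t - 2 - u := by ring
          simp only [hg, hA u, Nat.cast_add, Nat.cast_one, this]
          ring_nf
        rw [funext this]; exact hφ2sum
      have := (hasSum_nat_add_iff (f := g) 1).1 hshift
      simpa [hg, hA1, hA0] using this
    have hcomb : HasSum (fun u : ℕ => A (u + 1) • ε (t - (u + 1 : ℕ)))
        (φ1 • Y (t - 1) + φ2 • Y (t - 2)) := by
      have := hφ1sum.add hgsum
      convert this using 2 with u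
      have hc : t - ((u : ℤ) + 1) = t - 1 - u := by ring
      simp only [hg, Nat.cast_add, Nat.cast_one, hc, ← add_smul]
      ring_nf
    have := h1.unique hcomb
    have hε : (∑ i ∈ Finset.range 1, A i • ε (t - (i : ℕ))) = ε t := by
      simp [hA0]
    rw [hε] at this
    rw [sub_eq_iff_eq_add] at this
    exact this
  -- Part 3: uniform bound
  have part3 : ∃ C : ℝ, ∀ t : ℤ, ‖Y t‖ ≤ C := by
    refine ⟨∑' u : ℕ, l ^ u * σ, fun t => ?_⟩
    have h1 : ‖Y t‖ ≤ ∑' u : ℕ, ‖A u • ε (t - u)‖ := by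
      rw [(hY t).tsum_eq.symm]
      exact norm_tsum_le_tsum_norm (hsumm t)
    refine h1.trans (Summable.tsum_le_tsum (fun u => ?_) (hsumm t)
      ((summable_geometric_of_lt_one hlnn hl1).mul_right σ))
    rw [norm_smul, hnorm]
    exact mul_le_mul_of_nonneg_right (by simpa using hAle u) hσ.le
  refine ⟨part1, part2, part3, ?_⟩
  -- uniqueness
  rintro Z _ hZrec ⟨CZ, hCZ⟩
  obtain ⟨CY, hCY⟩ := part3
  set r : ℝ := |φ1| + |φ2| with hr
  have hr0 : 0 ≤ r := by positivity
  have hbound : ∀ n : ℕ, ∀ t : ℤ, ‖Z t - Y t‖ ≤ r ^ n * (CZ + CY) := by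
    intro n
    induction n with
    | zero =>
      intro t
      simpa using (norm_sub_le (Z t) (Y t)).trans (add_le_add (hCZ t) (hCY t))
    | succ n ih =>
      intro t
      have hd : Z t - Y t = φ1 • (Z (t - 1) - Y (t - 1)) + φ2 • (Z (t - 2) - Y (t - 2)) := by
        rw [hZrec t, part2 t]
        module
      rw [hd]
      calc ‖φ1 • (Z (t - 1) - Y (t - 1)) + φ2 • (Z (t - 2) - Y (t - 2))‖
          ≤ |φ1| * ‖Z (t - 1) - Y (t - 1)‖ + |φ2| * ‖Z (t - 2) - Y (t - 2)‖ := by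
            simpa [norm_smul] using
              norm_add_le (φ1 • (Z (t - 1) - Y (t - 1))) (φ2 • (Z (t - 2) - Y (t - 2)))
        _ ≤ |φ1| * (r ^ n * (CZ + CY)) + |φ2| * (r ^ n * (CZ + CY)) := by
            gcongr <;> first | positivity | exact ih _
        _ = r ^ (n + 1) * (CZ + CY) := by rw [hr]; ring
  funext t
  have htend : Filter.Tendsto (fun n : ℕ => r ^ n * (CZ + CY)) Filter.atTop (nhds 0) := by
    simpa using (tendsto_pow_atTop_nhds_zero_of_lt_one hr0 h).mul_const (CZ + CY)
  have hle : ‖Z t - Y t‖ ≤ 0 :=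
    ge_of_tendsto htend (Filter.Eventually.of_forall fun n => hbound n t)
  have : Z t - Y t = 0 := by
    have := norm_nonneg (Z t - Y t)
    have := le_antisymm hle this
    simpa using this
  exact sub_eq_zero.1 this
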